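/- arXiv:2504.05656 — 5 statements merged into one kernel-verified Lean document; each statement's English description precedes it below -/
import Mathlib

section
/- Let A be a 3-dimensional vector space with basis {e1,e2,e3}, and define bilinear operations ≻,≺ whose only nonzero products on basis elements are e1≻e1 = e2 and e1≻e2 = e3. Then (A,≻,≺) is an anti-pre-Novikov algebra. -/
def APNAxioms {A : Type*} [AddCommGroup A] (succ prec : A → A → A) : Prop :=
  (∀ x y z : A, succ ((succ x y + prec x y) - (succ y x + prec y x)) z
      = succ y (succ x z) - succ x (succ y z)) ∧
  (∀ x y z : A, prec x (succ y z + prec y z)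
      = prec (succ y x) z - prec (prec x y) z - succ y (prec x z)) ∧
  (∀ x y z : A, succ (succ x y + prec x y) z = -(prec (succ x z) y)) ∧
  (∀ x y z : A, prec (prec x y) z = prec (prec x z) y) ∧
  (∀ x y z : A, prec ((succ x y + prec x y) - (succ y x + prec y x)) z
      = succ x (succ y z + prec y z) - succ y (succ x z + prec x z))

theorem stmt7 {k A : Type*} [Field k] [AddCommGroup A] [Module k A]
    (b : Module.Basis (Fin 3) k A) (succ prec : A →ₗ[k] A →ₗ[k] A)
    (hsucc : ∀ x y : A, succ x y
        = (b.repr x 0 * b.repr y 0) • b 1 + (b.repr x 0 * b.repr y 1) • b 2)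
    (hprec : ∀ x y : A, prec x y = 0) :
    APNAxioms (fun x y => succ x y) (fun x y => prec x y) := by
  refine ⟨?_, ?_, ?_, ?_, ?_⟩ <;> intro x y z <;>
    simp [hsucc, hprec, map_add, map_sub, map_smul, Module.Basis.repr_self,
      Finsupp.single_apply] <;> ring_nf <;>
    module
end

section
/- Let (A,≻,≺) be an anti-pre-Novikov algebra and (V, l_≻, r_≻, l_≺, r_≺) a representation of it. Then (V, −l_≻, −r_≺) is a bimodule of the associated Novikov algebra (A,∘) where x∘y = x≻y + x≺y. -/
def NovikovBimodule {k A V : Type*} [Field k] [AddCommGroup A] [Module k A]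
    [AddCommGroup V] [Module k V]
    (circ : A →ₗ[k] A →ₗ[k] A) (l r : A →ₗ[k] V →ₗ[k] V) : Prop :=
  (∀ (x y : A) (v : V), l (circ x y - circ y x) v = l x (l y v) - l y (l x v)) ∧
  (∀ (x y : A) (v : V), l x (r y v) - r y (l x v) = r (circ x y) v - r y (r x v)) ∧
  (∀ (x y : A) (v : V), l (circ x y) v = r y (l x v)) ∧
  (∀ (x y : A) (v : V), r x (r y v) = r y (r x v))
def APNRep {k A V : Type*} [Field k] [AddCommGroup A] [Module k A]
    [AddCommGroup V] [Module k V]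
    (succ prec : A →ₗ[k] A →ₗ[k] A)
    (ls rs lp rp : A →ₗ[k] V →ₗ[k] V) : Prop :=
  (∀ (x y : A) (v : V), ls ((succ x y + prec x y) - (succ y x + prec y x)) v
      = ls y (ls x v) - ls x (ls y v)) ∧
  (∀ (x y : A) (v : V), rp (succ x y + prec x y) v
      = rp y (ls x v) - rp y (rp x v) - ls x (rp y v)) ∧
  (∀ (x y : A) (v : V), ls (succ x y + prec x y) v = -(rp y (ls x v))) ∧
  (∀ (x y : A) (v : V), lp (prec x y) v = rp y (lp x v)) ∧
  (∀ (x y : A) (v : V), lp ((succ x y + prec x y) - (succ y x + prec y x)) v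
      = ls x (ls y v + lp y v) - ls y (ls x v + lp x v)) ∧
  (∀ (x y : A) (v : V), rs x ((ls y v + lp y v) - (rs y v + rp y v))
      = rs (succ y x) v - ls y (rs x v)) ∧
  (∀ (x y : A) (v : V), lp x (ls y v + lp y v)
      = lp (succ y x) v - lp (prec x y) v - ls y (lp x v)) ∧
  (∀ (x y : A) (v : V), rp x ((ls y v + lp y v) - (rs y v + rp y v))
      = ls y (rs x v + rp x v) - rs (succ y x + prec y x) v) ∧
  (∀ (x y : A) (v : V), rs x (ls y v + lp y v) = -(lp (succ y x) v)) ∧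
  (∀ (x y : A) (v : V), rp x (rp y v) = rp y (rp x v)) ∧
  (∀ (x y : A) (v : V), lp x (rs y v + rp y v)
      = rp y (rs x v) - rp y (lp x v) - rs (prec x y) v) ∧
  (∀ (x y : A) (v : V), rs x (rs y v + rp y v) = -(rp y (rs x v)))

theorem stmt8 {k A V : Type*} [Field k] [AddCommGroup A] [Module k A]
    [AddCommGroup V] [Module k V]
    (succ prec : A →ₗ[k] A →ₗ[k] A)
    (hAPN : APNAxioms (fun x y => succ x y) (fun x y => prec x y))
    (ls rs lp rp : A →ₗ[k] V →ₗ[k] V)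
    (hrep : APNRep succ prec ls rs lp rp) :
    NovikovBimodule (succ + prec) (-ls) (-rp) := by
  obtain ⟨h1, h2, h3, _, _, _, _, _, _, h10, _, _⟩ := hrep
  refine ⟨fun x y v => ?_, fun x y v => ?_, fun x y v => ?_, fun x y v => ?_⟩
  · have := h1 x y v
    simp only [map_sub, map_add, map_neg, LinearMap.add_apply, LinearMap.sub_apply,
      LinearMap.neg_apply, neg_neg] at this ⊢
    linear_combination (norm := abel) -this
  · have := h2 x y v
    simp only [map_sub, map_add, map_neg, LinearMap.add_apply, LinearMap.sub_apply,
      LinearMap.neg_apply, neg_neg] at this ⊢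
    linear_combination (norm := abel) this
  · have := h3 x y v
    simp only [map_sub, map_add, map_neg, LinearMap.add_apply, LinearMap.sub_apply,
      LinearMap.neg_apply, neg_neg] at this ⊢
    linear_combination (norm := abel) -this
  · have := h10 x y v
    simp only [LinearMap.neg_apply, map_neg, neg_neg] 
    linear_combination (norm := abel) this
end

section
/- Let (V,l,r) be a bimodule of a Novikov algebra (A,∘) and T: V → A an anti-O-operator, i.e. T(u)∘T(v) = −T(l(T(u))v + r(T(v))u) for all u,v ∈ V. Define u≻v := −l(T(u))v and u≺v := −r(T(v))u, and u·v := u≻v + u≺v. Then for all u,v,w ∈ V: (v·u − u·v)≻w = u≻(v≻w) − v≻(u≻w); (u≻w)≺v − u≻(w≺v) = w≺(u·v) + (w≺u)≺v; (u·v)≻w = −(u≻w)≺v; and (w≺v)≺u = (w≺u)≺v. -/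
def NovikovAxioms {A : Type*} [AddCommGroup A] (circ : A → A → A) : Prop :=
  (∀ x y z : A, circ (circ x y) z - circ x (circ y z)
      = circ (circ y x) z - circ y (circ x z)) ∧
  (∀ x y z : A, circ (circ x y) z = circ (circ x z) y)
theorem stmt10 {k A V : Type*} [Field k] [AddCommGroup A] [Module k A]
    [AddCommGroup V] [Module k V]
    (circ : A →ₗ[k] A →ₗ[k] A) (l r : A →ₗ[k] V →ₗ[k] V)
    (hNov : NovikovAxioms (fun x y => circ x y))
    (hBim : NovikovBimodule circ l r)
    (T : V →ₗ[k] A)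
    (hT : ∀ u v : V, circ (T u) (T v) = -T (l (T u) v + r (T v) u))
    (sd pd : V → V → V)
    (hsd : ∀ u v, sd u v = -(l (T u) v))
    (hpd : ∀ u v, pd u v = -(r (T v) u)) :
    (∀ u v w : V, sd ((sd v u + pd v u) - (sd u v + pd u v)) w
        = sd u (sd v w) - sd v (sd u w)) ∧
    (∀ u v w : V, pd (sd u w) v - sd u (pd w v)
        = pd w (sd u v + pd u v) + pd (pd w u) v) ∧
    (∀ u v w : V, sd (sd u v + pd u v) w = -(pd (sd u w) v)) ∧
    (∀ u v w : V, pd (pd w v) u = pd (pd w u) v) := by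
  obtain ⟨h1, h2, h3, h4⟩ := hBim
  have key : ∀ u v : V, T (sd u v + pd u v) = circ (T u) (T v) := by
    intro u v
    rw [hsd, hpd, hT]
    simp [neg_add]
    abel
  refine ⟨?_, ?_, ?_, ?_⟩
  · intro u v w
    have hTd : T (sd v u + pd v u - (sd u v + pd u v))
        = circ (T v) (T u) - circ (T u) (T v) := by
      rw [map_sub, key, key]
    rw [hsd, hTd, h1, hsd, hsd, hsd, hsd]
    simp only [map_neg, neg_neg]
    abel
  · intro u v w
    have h := h2 (T u) (T v) w
    rw [hpd (sd u w) v, hsd u (pd w v), hsd u w, hpd w v, hpd w (sd u v + pd u v),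
      hpd (pd w u) v, hpd w u, key]
    simp only [map_neg, neg_neg]
    rw [show r (T v) ((l (T u)) w) - (l (T u)) ((r (T v)) w)
        = -((l (T u)) ((r (T v)) w) - (r (T v)) ((l (T u)) w)) from by abel, h]
    abel
  · intro u v w
    rw [hsd, key, h3, hpd, hsd]
    simp
  · intro u v w
    rw [hpd, hpd, hpd, hpd]
    simp only [map_neg, neg_neg, h4]
end

section
/- Let (V,l,r) be a bimodule of a Novikov algebra (A,∘) and T: V → A an anti-O-operator. Define u≻v := −l(T(u))v, u≺v := −r(T(v))u, u·v := u≻v + u≺v. Then (V,≻,≺) is an anti-pre-Novikov algebra if and only if T is strong, i.e. l(T(u)∘T(v) − T(v)∘T(u))w + r(T(u)∘T(w))v − r(T(v)∘T(w))u = 0 for all u,v,w ∈ V. -/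
theorem stmt11 {k A V : Type*} [Field k] [AddCommGroup A] [Module k A]
    [AddCommGroup V] [Module k V]
    (circ : A →ₗ[k] A →ₗ[k] A) (l r : A →ₗ[k] V →ₗ[k] V)
    (hNov : NovikovAxioms (fun x y => circ x y))
    (hBim : NovikovBimodule circ l r)
    (T : V →ₗ[k] A)
    (hT : ∀ u v : V, circ (T u) (T v) = -T (l (T u) v + r (T v) u))
    (sd pd : V → V → V)
    (hsd : ∀ u v, sd u v = -(l (T u) v))
    (hpd : ∀ u v, pd u v = -(r (T v) u)) :
    APNAxioms sd pd ↔
      (∀ u v w : V,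
        l (circ (T u) (T v) - circ (T v) (T u)) w
          + r (circ (T u) (T w)) v - r (circ (T v) (T w)) u = 0) := by
  obtain ⟨hb1, hb2, hb3, hb4⟩ := hBim
  have h2 : ∀ (x y : A) (v : V),
      r (circ x y) v = l x (r y v) - r y (l x v) + r y (r x v) := by
    intro x y v; rw [hb2]; abel
  have key : ∀ u v : V, T (sd u v + pd u v) = circ (T u) (T v) := by
    intro u v; rw [hsd, hpd, hT, ← neg_add, map_neg]
  have hS : ∀ u v w : V,
      pd ((sd u v + pd u v) - (sd v u + pd v u)) w
        - (sd u (sd v w + pd v w) - sd v (sd u w + pd u w))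
      = -(l (circ (T u) (T v) - circ (T v) (T u)) w
          + r (circ (T u) (T w)) v - r (circ (T v) (T w)) u) := by
    intro u v w
    rw [hb1]
    simp only [hsd, hpd, h2, map_add, map_sub, map_neg, neg_neg,
      LinearMap.sub_apply, LinearMap.add_apply, LinearMap.neg_apply]
    abel
  constructor
  · rintro ⟨-, -, -, -, h5⟩ u v w
    have h := hS u v w
    rw [sub_eq_zero.mpr (h5 u v w)] at h
    exact neg_eq_zero.mp h.symm
  · intro hstrong
    refine ⟨?_, ?_, ?_, ?_, ?_⟩
    · intro x y z
      rw [hsd, map_sub, key, key, hb1]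
      simp only [hsd, map_neg]
      abel
    · intro x y z
      rw [hpd, key, h2]
      simp only [hsd, hpd, map_neg, neg_neg]
      abel
    · intro x y z
      rw [hsd, key, hb3]
      simp only [hsd, hpd, map_neg, neg_neg]
    · intro x y z
      simp only [hpd, map_neg, neg_neg]
      exact hb4 (T z) (T y) x
    · intro x y z
      have h := hS x y z
      rw [hstrong x y z, neg_zero] at h
      exact sub_eq_zero.mp h
end

section
/- Let (A,∘) be the 2-dimensional Novikov algebra over a field k with basis {e1,e2} and nonzero products e1∘e1 = e1, e2∘e1 = e2. For a ∈ k, define T: A → A by T(e1) = a·e2, T(e2) = 0. Then T is a strong anti-Rota-Baxter operator on (A,∘): T(x)∘T(y) = −T(T(x)∘y + x∘T(y)) and [T(x),T(y)]∘z + y∘(T(x)∘T(z)) − x∘(T(y)∘T(z)) = 0 for all x,y,z ∈ A, where [x,y] = x∘y − y∘x. -/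
theorem stmt13 {k A : Type*} [Field k] [AddCommGroup A] [Module k A]
    (b : Module.Basis (Fin 2) k A) (circ : A →ₗ[k] A →ₗ[k] A)
    (hcirc : ∀ x y : A, circ x y
        = (b.repr x 0 * b.repr y 0) • b 0 + (b.repr x 1 * b.repr y 0) • b 1)
    (a : k) (T : A →ₗ[k] A)
    (hT0 : T (b 0) = a • b 1) (hT1 : T (b 1) = 0) :
    (∀ x y : A, circ (T x) (T y) = -T (circ (T x) y + circ x (T y))) ∧
    (∀ x y z : A,
      circ (circ (T x) (T y) - circ (T y) (T x)) z
        + circ y (circ (T x) (T z)) - circ x (circ (T y) (T z)) = 0) := by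
  have hTx : ∀ x : A, T x = (a * b.repr x 0) • b 1 := by
    intro x
    conv_lhs => rw [← b.sum_repr x]
    rw [map_sum, Fin.sum_univ_two, map_smul, map_smul, hT0, hT1, smul_smul,
      smul_zero, add_zero, mul_comm]
  have hr0 : ∀ x : A, b.repr (T x) 0 = 0 := by
    intro x
    rw [hTx x, map_smul, Finsupp.smul_apply, b.repr_self]
    simp
  have hr1 : ∀ x : A, b.repr (T x) 1 = a * b.repr x 0 := by
    intro x
    rw [hTx x, map_smul, Finsupp.smul_apply, b.repr_self]
    simp
  constructor
  · intro x y
    rw [hcirc (T x) (T y), hr0, hr0, hcirc (T x) y, hcirc x (T y), hr0, hr1, hr0]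
    simp [hTx, map_add, hT1]
  · intro x y z
    simp [hcirc, hr0]
end
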